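/- arXiv:2407.11247 — 3 statements merged into one kernel-verified Lean document; each statement's English description precedes it below -/
import Mathlib

section
/- Let s ∈ ℝ and let a, b, f, h be unit quaternions with re(b) = 0 and re(h) = 0. Set p = exp(s · im(b*h)) and q = exp(s · im(f*a⁻¹*h)). Then re(h * a⁻¹ * h * q⁻¹ * p⁻¹) = −re(p⁻¹ * a * f⁻¹ * q * f) and re(a⁻¹ * h * q⁻¹ * p⁻¹) = −re(h * p⁻¹ * a * f⁻¹ * q * f). (Lemma 2.2 of the paper: G = −F, where G = (G₁, G₂) are the earring defining functions and F = (F₂, F₃) the functions used in the earlier paper.) -/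
open Quaternion

section aux

/-- cyclicity of re -/
lemma re_mul_comm (x y : ℍ[ℝ]) : (x * y).re = (y * x).re := by
  simp only [Quaternion.re_mul]; ring

end aux

set_option maxHeartbeats 1600000 in
/-- Lemma 2.2 of the paper: `G = -F`.  With `p = exp(s·im(b h))` and `q = exp(s·im(f a⁻¹ h))`,
where `a, b, f, h` are unit quaternions with `re b = 0` and `re h = 0`, one has
`re(h a⁻¹ h q⁻¹ p⁻¹) = -re(p⁻¹ a f⁻¹ q f)` and `re(a⁻¹ h q⁻¹ p⁻¹) = -re(h p⁻¹ a f⁻¹ q f)`. -/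
theorem G_eq_neg_F (s : ℝ) (a b f h : ℍ[ℝ])
    (ha : ‖a‖ = 1) (hb : ‖b‖ = 1) (hf : ‖f‖ = 1) (hh : ‖h‖ = 1)
    (hbre : b.re = 0) (hhre : h.re = 0)
    (p q : ℍ[ℝ])
    (hp : p = NormedSpace.exp (s • Quaternion.im (b * h)))
    (hq : q = NormedSpace.exp (s • Quaternion.im (f * a⁻¹ * h))) :
    (h * a⁻¹ * h * q⁻¹ * p⁻¹).re = -(p⁻¹ * a * f⁻¹ * q * f).re ∧
    (a⁻¹ * h * q⁻¹ * p⁻¹).re = -(h * p⁻¹ * a * f⁻¹ * q * f).re := by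
  letI : NormedAlgebra ℚ ℍ[ℝ] := NormedAlgebra.restrictScalars ℚ ℝ ℍ[ℝ]
  -- basic star facts
  have hsh : star h = -h := Quaternion.star_eq_neg.2 hhre
  have hsb : star b = -b := Quaternion.star_eq_neg.2 hbre
  have hinvs : ∀ z : ℍ[ℝ], ‖z‖ = 1 → z⁻¹ = star z := by
    intro z hz
    have : star z * z = 1 := by
      rw [Quaternion.star_mul_self, Quaternion.normSq_eq_norm_mul_self, hz]
      norm_num
    exact (inv_eq_of_mul_eq_one_left this)
  have hainv : a⁻¹ = star a := hinvs a ha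
  have hfinv : f⁻¹ = star f := hinvs f hf
  have hhinv : h⁻¹ = star h := hinvs h hh
  have ha0 : a ≠ 0 := fun h0 => by simp [h0] at ha
  have hf0 : f ≠ 0 := fun h0 => by simp [h0] at hf
  have hh0 : h ≠ 0 := fun h0 => by simp [h0] at hh
  have hhh : h * h = -1 := by
    have h1 : star h * h = 1 := by
      rw [Quaternion.star_mul_self, Quaternion.normSq_eq_norm_mul_self, hh]
      norm_num
    rw [hsh, neg_mul] at h1
    exact neg_eq_iff_eq_neg.mp h1
  -- the exponents
  set x : ℍ[ℝ] := s • Quaternion.im (b * h) with hx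
  set y : ℍ[ℝ] := s • Quaternion.im (f * a⁻¹ * h) with hy
  have hxre : x.re = 0 := by simp [hx]
  have hyre : y.re = 0 := by simp [hy]
  have hsx : star x = -x := Quaternion.star_eq_neg.2 hxre
  have hsy : star y = -y := Quaternion.star_eq_neg.2 hyre
  -- star of p and q
  have hsp : star p = p⁻¹ := by
    rw [hp, NormedSpace.star_exp, hsx, NormedSpace.exp_neg]
  have hsq : star q = q⁻¹ := by
    rw [hq, NormedSpace.star_exp, hsy, NormedSpace.exp_neg]
  -- conjugation of real scalars
  have hcoe_conj : ∀ g : ℍ[ℝ], g ≠ 0 → ∀ r : ℝ, g * (r : ℍ[ℝ]) * g⁻¹ = (r : ℍ[ℝ]) := by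
    intro g hg r
    rw [← Quaternion.coe_commutes, mul_assoc, mul_inv_cancel₀ hg, mul_one]
  -- conjugation identity for x : h x h⁻¹ = -x
  have hrb : b * h + h * b = 2 * (((b * h).re : ℝ) : ℍ[ℝ]) := by
    have h1 : star (b * h) = h * b := by rw [star_mul, hsh, hsb, neg_mul_neg]
    have h2 := Quaternion.star_eq_two_re_sub (a := b * h)
    rw [h1] at h2
    rw [h2]
    push_cast
    abel
  have him : Quaternion.im (b * h) = b * h - (((b * h).re : ℝ) : ℍ[ℝ]) := (Quaternion.sub_re_self _).symm
  have c1 : h * (b * h) * h⁻¹ = h * b := by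
    rw [hhinv, hsh]
    calc h * (b * h) * (-h) = -(h * b * (h * h)) := by noncomm_ring
    _ = h * b := by rw [hhh]; noncomm_ring
  have hconjx : h * x * h⁻¹ = -x := by
    rw [hx, him, mul_smul_comm, smul_mul_assoc, mul_sub, sub_mul, c1,
      hcoe_conj h hh0, ← smul_neg]
    congr 1
    have hswap : h * b = 2 * (((b * h).re : ℝ) : ℍ[ℝ]) - b * h := by
      rw [eq_sub_iff_add_eq, add_comm]; exact hrb
    rw [hswap]; noncomm_ring
  -- conjugation identity for y : (a f⁻¹) y (a f⁻¹)⁻¹ = h y h⁻¹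
  have haf0 : a * f⁻¹ ≠ 0 := mul_ne_zero ha0 (inv_ne_zero hf0)
  have him2 : Quaternion.im (f * a⁻¹ * h)
      = f * a⁻¹ * h - (((f * a⁻¹ * h).re : ℝ) : ℍ[ℝ]) := (Quaternion.sub_re_self _).symm
  have c2 : h * (f * a⁻¹ * h) * h⁻¹ = h * (f * a⁻¹) := by
    rw [hhinv, hsh]
    calc h * (f * a⁻¹ * h) * (-h) = -(h * (f * a⁻¹) * (h * h)) := by noncomm_ring
    _ = h * (f * a⁻¹) := by rw [hhh]; noncomm_ring
  have c3 : (a * f⁻¹) * (f * a⁻¹ * h) * (a * f⁻¹)⁻¹ = h * (f * a⁻¹) := by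
    rw [mul_inv_rev, inv_inv]
    calc a * f⁻¹ * (f * a⁻¹ * h) * (f * a⁻¹)
        = a * (f⁻¹ * f) * (a⁻¹ * h * f * a⁻¹) := by noncomm_ring
    _ = a * (a⁻¹ * h * f * a⁻¹) := by rw [inv_mul_cancel₀ hf0, mul_one]
    _ = (a * a⁻¹) * (h * f * a⁻¹) := by noncomm_ring
    _ = h * (f * a⁻¹) := by rw [mul_inv_cancel₀ ha0, one_mul]; noncomm_ring
  have key : ∀ g : ℍ[ℝ], g ≠ 0 → g * (f * a⁻¹ * h) * g⁻¹ = h * (f * a⁻¹) →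
      g * y * g⁻¹ = s • (h * (f * a⁻¹) - (((f * a⁻¹ * h).re : ℝ) : ℍ[ℝ])) := by
    intro g hg hgu
    rw [hy, him2, mul_smul_comm, smul_mul_assoc, mul_sub, sub_mul, hgu, hcoe_conj g hg]
  have hconjy : (a * f⁻¹) * y * (a * f⁻¹)⁻¹ = h * y * h⁻¹ := by
    rw [key (a * f⁻¹) haf0 c3, key h hh0 c2]
  -- exponentiate the conjugation identities
  have hP : h * p * h⁻¹ = p⁻¹ := by
    rw [hp, ← NormedSpace.exp_conj h x hh0, hconjx, NormedSpace.exp_neg]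
  have hQ : (a * f⁻¹) * q * (a * f⁻¹)⁻¹ = h * q * h⁻¹ := by
    rw [hq, ← NormedSpace.exp_conj h y hh0,
      ← NormedSpace.exp_conj (a * f⁻¹) y haf0, hconjy]
  -- consequences of the conjugation identities
  have hPh : p⁻¹ * h = h * p := by
    calc p⁻¹ * h = h * p * h⁻¹ * h := by rw [hP]
    _ = h * p * (h⁻¹ * h) := by rw [mul_assoc]
    _ = h * p := by rw [inv_mul_cancel₀ hh0, mul_one]
  have hPh' : h * p⁻¹ = p * h := by
    calc h * p⁻¹ = h * (h * p * h⁻¹) := by rw [hP]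
    _ = (h * h) * p * h⁻¹ := by noncomm_ring
    _ = (-1) * p * (-h) := by rw [hhh, hhinv, hsh]
    _ = p * h := by noncomm_ring
  have key1 : a * f⁻¹ * q * f = h * q * h⁻¹ * a := by
    rw [mul_inv_rev, inv_inv] at hQ
    calc a * f⁻¹ * q * f = a * f⁻¹ * q * f * (a⁻¹ * a) := by
          rw [inv_mul_cancel₀ ha0, mul_one]
    _ = (a * f⁻¹ * q * (f * a⁻¹)) * a := by noncomm_ring
    _ = h * q * h⁻¹ * a := by rw [hQ]
  -- star computations
  have hspinv : star (p⁻¹) = p := by rw [← hsp, star_star]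
  have hsqinv : star (q⁻¹) = q := by rw [← hsq, star_star]
  have hsainv : star (a⁻¹) = a := by rw [hainv, star_star]
  have hstar1 : star (h * a⁻¹ * h * q⁻¹ * p⁻¹) = p * q * h * a * h := by
    simp only [star_mul, hspinv, hsqinv, hsainv, hsh]
    noncomm_ring
  have hstar2 : star (a⁻¹ * h * q⁻¹ * p⁻¹) = -(p * q * h * a) := by
    simp only [star_mul, hspinv, hsqinv, hsainv, hsh]
    noncomm_ring
  -- rewrite the right-hand sides
  have hr1 : p⁻¹ * a * f⁻¹ * q * f = -(h * (p * q * h * a)) := by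
    calc p⁻¹ * a * f⁻¹ * q * f = p⁻¹ * (a * f⁻¹ * q * f) := by noncomm_ring
    _ = p⁻¹ * (h * q * h⁻¹ * a) := by rw [key1]
    _ = (p⁻¹ * h) * q * h⁻¹ * a := by noncomm_ring
    _ = (h * p) * q * (-h) * a := by rw [hPh, hhinv, hsh]
    _ = -(h * (p * q * h * a)) := by noncomm_ring
  have hr2 : h * p⁻¹ * a * f⁻¹ * q * f = p * q * h * a := by
    calc h * p⁻¹ * a * f⁻¹ * q * f = (h * p⁻¹) * (a * f⁻¹ * q * f) := by noncomm_ring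
    _ = (p * h) * (h * q * h⁻¹ * a) := by rw [hPh', key1]
    _ = p * (h * h) * (q * h⁻¹ * a) := by noncomm_ring
    _ = p * (-1) * (q * (-h) * a) := by rw [hhh, hhinv, hsh]
    _ = p * q * h * a := by noncomm_ring
  constructor
  · have g1 : (h * a⁻¹ * h * q⁻¹ * p⁻¹).re = (p * q * h * a * h).re := by
      rw [← Quaternion.re_star (h * a⁻¹ * h * q⁻¹ * p⁻¹), hstar1]
    rw [g1, hr1, Quaternion.re_neg, neg_neg, re_mul_comm h (p * q * h * a)]
  · have g2 : (a⁻¹ * h * q⁻¹ * p⁻¹).re = -((p * q * h * a).re) := by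
      rw [← Quaternion.re_star (a⁻¹ * h * q⁻¹ * p⁻¹), hstar2, Quaternion.re_neg]
    rw [g2, hr2]
end

section
/- Let s, σ, η ∈ ℝ with 2η = −s·cos(σ + 2η). Set u = cos σ·k − sin σ·j (= e^{σi}k), h₀ = cos σ·j + sin σ·k (= e^{σi}j), h = exp(η·u) * h₀ * exp(−η·u), a = i, f = i, q = exp(s·h), p = exp(s·h) * exp((−2η)·u) * exp(−s·h), and b = exp(s·h) * exp((−σ)·u) * i * exp(−s·h). Then: (1) im(f*a⁻¹*h) = h, so q = exp(s·im(f*a⁻¹*h)); (2) p = exp(s·im(b*h)); (3) re(p * q * star(h) * a) = 0; (4) re(p * q * star(h) * a * star(h)) = 0; (5) re(b * star(h)) = −sin(σ + 2η). (Lemma 7.3 of the paper, earring case: the given circle of quaternion tuples satisfies the perturbation conditions and the earring equations G = (0,0); it parameterizes K_s, the preimage of the bottom edge of the pillowcase in N_s.) -/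
open Quaternion

/-- The imaginary unit `i` of the quaternions. -/
noncomputable def qi : ℍ[ℝ] := ⟨0, 1, 0, 0⟩
/-- The imaginary unit `j` of the quaternions. -/
noncomputable def qj : ℍ[ℝ] := ⟨0, 0, 1, 0⟩
/-- The imaginary unit `k` of the quaternions. -/
noncomputable def qk : ℍ[ℝ] := ⟨0, 0, 0, 1⟩

/-- A quaternion given by its four components. -/
def qmk (a b c d : ℝ) : ℍ[ℝ] := ⟨a, b, c, d⟩

@[simp] lemma qmk_re (a b c d : ℝ) : (qmk a b c d).re = a := rfl
@[simp] lemma qmk_imI (a b c d : ℝ) : (qmk a b c d).imI = b := rfl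
@[simp] lemma qmk_imJ (a b c d : ℝ) : (qmk a b c d).imJ = c := rfl
@[simp] lemma qmk_imK (a b c d : ℝ) : (qmk a b c d).imK = d := rfl

lemma qi_eq : qi = qmk 0 1 0 0 := rfl
lemma qj_eq : qj = qmk 0 0 1 0 := rfl
lemma qk_eq : qk = qmk 0 0 0 1 := rfl

lemma norm_of_normSq_one {v : ℍ[ℝ]} (h : normSq v = 1) : ‖v‖ = 1 := by
  have := Quaternion.normSq_eq_norm_mul_self v
  nlinarith [norm_nonneg v]

lemma exp_unit_pure (t : ℝ) (v : ℍ[ℝ]) (hre : v.re = 0) (hn : ‖v‖ = 1) :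
    NormedSpace.exp (t • v) = ((Real.cos t : ℝ) : ℍ[ℝ]) + Real.sin t • v := by
  rcases eq_or_ne t 0 with rfl | ht
  · simp
  · have hre' : (t • v).re = 0 := by simp [hre]
    rw [Quaternion.exp_of_re_eq_zero _ hre']
    have hnv : ‖t • v‖ = |t| := by rw [norm_smul, hn, mul_one, Real.norm_eq_abs]
    rw [hnv, smul_smul]
    rcases lt_or_gt_of_ne ht with h | h
    · rw [abs_of_neg h]
      rw [Real.cos_neg, Real.sin_neg]
      congr 1
      field_simp
    · rw [abs_of_pos h]
      congr 1
      field_simp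

lemma exp_unit_pure_neg (t : ℝ) (v : ℍ[ℝ]) (hre : v.re = 0) (hn : ‖v‖ = 1) :
    NormedSpace.exp ((-t) • v) = ((Real.cos t : ℝ) : ℍ[ℝ]) - Real.sin t • v := by
  rw [exp_unit_pure _ _ hre hn, Real.cos_neg, Real.sin_neg, neg_smul, sub_eq_add_neg]

set_option maxHeartbeats 2000000 in
/-- Lemma 7.3 of the paper, earring case: with `η` the solution of `2η = −s·cos(σ + 2η)`,
the given circle of quaternion tuples satisfies the perturbation conditions and the earring
equations `G = (0,0)`; it parameterizes `K_s`, the preimage of the bottom edge of the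
pillowcase in `N_s`. -/
theorem earring_bottom_edge_parameterization (s σ η : ℝ)
    (hη : 2 * η = -s * Real.cos (σ + 2 * η))
    (u h₀ h a f q p b : ℍ[ℝ])
    (hu : u = Real.cos σ • qk - Real.sin σ • qj)
    (hh₀ : h₀ = Real.cos σ • qj + Real.sin σ • qk)
    (hh : h = NormedSpace.exp (η • u) * h₀ * NormedSpace.exp ((-η) • u))
    (ha : a = qi) (hf : f = qi)
    (hq : q = NormedSpace.exp (s • h))
    (hp : p = NormedSpace.exp (s • h) * NormedSpace.exp ((-(2 * η)) • u) *
      NormedSpace.exp ((-s) • h))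
    (hb : b = NormedSpace.exp (s • h) * NormedSpace.exp ((-σ) • u) * qi *
      NormedSpace.exp ((-s) • h)) :
    Quaternion.im (f * a⁻¹ * h) = h ∧
    q = NormedSpace.exp (s • Quaternion.im (f * a⁻¹ * h)) ∧
    p = NormedSpace.exp (s • Quaternion.im (b * h)) ∧
    (p * q * star h * a).re = 0 ∧
    (p * q * star h * a * star h).re = 0 ∧
    (b * star h).re = -Real.sin (σ + 2 * η) := by
  have pyth := Real.sin_sq_add_cos_sq
  -- basic facts about u
  have hu_re : u.re = 0 := by rw [hu]; simp [qj_eq, qk_eq]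
  have hu_n : ‖u‖ = 1 := norm_of_normSq_one (by
    rw [hu]; simp [Quaternion.normSq_def', qj_eq, qk_eq])
  -- explicit form of h
  have hhe : h = (qmk 0 (-Real.sin (2*η)) (Real.cos (2*η) * Real.cos σ)
      (Real.cos (2*η) * Real.sin σ) : ℍ[ℝ]) := by
    rw [hh, exp_unit_pure _ _ hu_re hu_n, exp_unit_pure_neg _ _ hu_re hu_n, hh₀, hu,
      Real.sin_two_mul, Real.cos_two_mul]
    apply Quaternion.ext
    · simp [qi_eq, qj_eq, qk_eq, Quaternion.re_mul, Quaternion.imI_mul, Quaternion.imJ_mul,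
        Quaternion.imK_mul]
      ring
    · simp [qi_eq, qj_eq, qk_eq, Quaternion.re_mul, Quaternion.imI_mul, Quaternion.imJ_mul,
        Quaternion.imK_mul]
      linear_combination (-2*Real.cos η*Real.sin η) * pyth σ
    · simp [qi_eq, qj_eq, qk_eq, Quaternion.re_mul, Quaternion.imI_mul, Quaternion.imJ_mul,
        Quaternion.imK_mul]
      linear_combination (-(Real.cos σ)*Real.sin σ^2 - Real.cos σ^3) * pyth η +
        (-(Real.cos σ) + Real.cos η^2*Real.cos σ) * pyth σ
    · simp [qi_eq, qj_eq, qk_eq, Quaternion.re_mul, Quaternion.imI_mul, Quaternion.imJ_mul,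
        Quaternion.imK_mul]
      linear_combination (-(Real.sin σ^3) - Real.cos σ^2*Real.sin σ) * pyth η +
        (-(Real.sin σ) + Real.cos η^2*Real.sin σ) * pyth σ
  have hh_re : h.re = 0 := by rw [hhe, qmk_re]
  have hh_n : ‖h‖ = 1 := norm_of_normSq_one (by
    rw [hhe]; simp [Quaternion.normSq_def']
    linear_combination Real.cos (2*η)^2 * pyth σ + pyth (2*η))
  have hsh : star h = -h := by
    rw [hhe]; apply Quaternion.ext <;> simp
  -- exponentials of h
  have hE : NormedSpace.exp (s • h) = ((Real.cos s : ℝ) : ℍ[ℝ]) + Real.sin s • h :=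
    exp_unit_pure _ _ hh_re hh_n
  have hE' : NormedSpace.exp ((-s) • h) = ((Real.cos s : ℝ) : ℍ[ℝ]) - Real.sin s • h :=
    exp_unit_pure_neg _ _ hh_re hh_n
  have hnE : ‖NormedSpace.exp (s • h)‖ = 1 := by
    rw [Quaternion.norm_exp]; simp [hh_re]
  have hnE' : ‖NormedSpace.exp ((-s) • h)‖ = 1 := by
    rw [Quaternion.norm_exp]; simp [hh_re]
  have hE'E : NormedSpace.exp ((-s) • h) * NormedSpace.exp (s • h) = 1 := by
    rw [hE, hE', hhe]
    apply Quaternion.ext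
    · simp [Quaternion.re_mul, Quaternion.imI_mul, Quaternion.imJ_mul, Quaternion.imK_mul]
      linear_combination Real.cos (2*η)^2*Real.sin s^2 * pyth σ + Real.sin s^2 * pyth (2*η) +
        pyth s
    · simp [Quaternion.re_mul, Quaternion.imI_mul, Quaternion.imJ_mul, Quaternion.imK_mul]
      ring
    · simp [Quaternion.re_mul, Quaternion.imI_mul, Quaternion.imJ_mul, Quaternion.imK_mul]
      ring
    · simp [Quaternion.re_mul, Quaternion.imI_mul, Quaternion.imJ_mul, Quaternion.imK_mul]
      ring
  -- the conjugated axis W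
  obtain ⟨W, hWdef⟩ : ∃ W : ℍ[ℝ], W = (qmk 0
      (2*Real.cos s*Real.sin s*Real.cos (2*η))
      (-((Real.cos s^2 - Real.sin s^2)*Real.sin σ) +
        2*Real.cos s*Real.sin s*Real.sin (2*η)*Real.cos σ)
      ((Real.cos s^2 - Real.sin s^2)*Real.cos σ +
        2*Real.cos s*Real.sin s*Real.sin (2*η)*Real.sin σ) : ℍ[ℝ]) := ⟨_, rfl⟩
  have hW_re : W.re = 0 := by rw [hWdef, qmk_re]
  have hwW : NormedSpace.exp (s • h) * u * NormedSpace.exp ((-s) • h) = W := by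
    rw [hE, hE', hhe, hu, hWdef]
    apply Quaternion.ext
    · simp [qi_eq, qj_eq, qk_eq, Quaternion.re_mul, Quaternion.imI_mul, Quaternion.imJ_mul,
        Quaternion.imK_mul]
      ring
    · simp [qi_eq, qj_eq, qk_eq, Quaternion.re_mul, Quaternion.imI_mul, Quaternion.imJ_mul,
        Quaternion.imK_mul]
      linear_combination (2*Real.cos (2*η)*Real.cos s*Real.sin s) * pyth σ
    · simp [qi_eq, qj_eq, qk_eq, Quaternion.re_mul, Quaternion.imI_mul, Quaternion.imJ_mul,
        Quaternion.imK_mul]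
      linear_combination (Real.sin σ*Real.cos (2*η)^2*Real.sin s^2) * pyth σ +
        (Real.sin σ*Real.sin s^2) * pyth (2*η)
    · simp [qi_eq, qj_eq, qk_eq, Quaternion.re_mul, Quaternion.imI_mul, Quaternion.imJ_mul,
        Quaternion.imK_mul]
      linear_combination (-(Real.cos σ)*Real.cos (2*η)^2*Real.sin s^2) * pyth σ +
        (-(Real.cos σ)*Real.sin s^2) * pyth (2*η)
  have hW_n : ‖W‖ = 1 := by
    rw [← hwW, norm_mul, norm_mul, hnE, hnE', hu_n]; norm_num
  -- part (1)
  have hqine : (qi : ℍ[ℝ]) ≠ 0 := by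
    intro h0
    have := congrArg QuaternionAlgebra.imI h0
    simp [qi_eq] at this
  have hfa : f * a⁻¹ * h = h := by
    rw [hf, ha, mul_inv_cancel₀ hqine, one_mul]
  have him_h : Quaternion.im h = h := by
    apply Quaternion.ext <;> simp [hh_re]
  -- b * h
  have hX : NormedSpace.exp ((-σ) • u) = ((Real.cos σ : ℝ) : ℍ[ℝ]) - Real.sin σ • u :=
    exp_unit_pure_neg _ _ hu_re hu_n
  have hbh : b * h = ((Real.sin (σ + 2*η) : ℝ) : ℍ[ℝ]) + Real.cos (σ + 2*η) • W := by
    rw [hb, hX, hE, hE', hhe, hu, hWdef, Real.sin_add, Real.cos_add]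
    apply Quaternion.ext
    · simp [qi_eq, qj_eq, qk_eq, Quaternion.re_mul, Quaternion.imI_mul, Quaternion.imJ_mul,
        Quaternion.imK_mul]
      linear_combination (Real.sin σ*Real.cos (2*η)*Real.cos s^2 +
          Real.sin σ*Real.cos (2*η)*Real.sin (2*η)^2*Real.sin s^2 +
          Real.sin σ*Real.cos (2*η)^3*Real.sin s^2 +
          Real.sin σ^3*Real.cos (2*η)^3*Real.sin s^2 +
          Real.cos σ*Real.cos (2*η)^2*Real.sin (2*η)*Real.sin s^2 +
          Real.cos σ^2*Real.sin σ*Real.cos (2*η)^3*Real.sin s^2) * pyth σ +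
        (Real.sin σ*Real.cos (2*η)*Real.sin s^2 +
          Real.cos σ*Real.sin (2*η)*Real.sin s^2) * pyth (2*η) +
        (Real.sin σ*Real.cos (2*η) + Real.cos σ*Real.sin (2*η)) * pyth s
    · simp [qi_eq, qj_eq, qk_eq, Quaternion.re_mul, Quaternion.imI_mul, Quaternion.imJ_mul,
        Quaternion.imK_mul]
      linear_combination (-2*Real.sin σ*Real.cos (2*η)*Real.sin (2*η)*Real.cos s*Real.sin s +
        2*Real.cos σ*Real.cos (2*η)^2*Real.cos s*Real.sin s) * pyth σ
    · simp [qi_eq, qj_eq, qk_eq, Quaternion.re_mul, Quaternion.imI_mul, Quaternion.imJ_mul,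
        Quaternion.imK_mul]
      linear_combination (Real.sin (2*η)*Real.sin s^2 - Real.sin (2*η)^3*Real.sin s^2 -
          Real.cos (2*η)^2*Real.sin (2*η)*Real.sin s^2 -
          Real.sin σ^2*Real.cos (2*η)^2*Real.sin (2*η)*Real.sin s^2 +
          Real.cos σ*Real.sin σ*Real.cos (2*η)^3*Real.sin s^2) * pyth σ +
        (-(Real.sin (2*η)*Real.sin s^2) + Real.cos σ*Real.sin σ*Real.cos (2*η)*Real.sin s^2 +
          Real.cos σ^2*Real.sin (2*η)*Real.sin s^2) * pyth (2*η)
    · simp [qi_eq, qj_eq, qk_eq, Quaternion.re_mul, Quaternion.imI_mul, Quaternion.imJ_mul,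
        Quaternion.imK_mul]
      linear_combination (Real.cos σ*Real.sin σ*Real.cos (2*η)^2*Real.sin (2*η)*Real.sin s^2 -
          Real.cos σ^2*Real.cos (2*η)^3*Real.sin s^2) * pyth σ +
        (Real.cos σ*Real.sin σ*Real.sin (2*η)*Real.sin s^2 -
          Real.cos σ^2*Real.cos (2*η)*Real.sin s^2) * pyth (2*η)
  have him_bh : Quaternion.im (b * h) = Real.cos (σ + 2*η) • W := by
    rw [hbh]
    apply Quaternion.ext <;> simp [hW_re]
  -- part (3): p as exponential
  have hG : NormedSpace.exp ((-(2 * η)) • u) =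
      ((Real.cos (2*η) : ℝ) : ℍ[ℝ]) - Real.sin (2*η) • u :=
    exp_unit_pure_neg _ _ hu_re hu_n
  have hscos : s * Real.cos (σ + 2*η) = -(2*η) := by linarith
  have hpW : p = ((Real.cos (2*η) : ℝ) : ℍ[ℝ]) - Real.sin (2*η) • W := by
    rw [hp, hG, hE, hE', hhe, hu, hWdef]
    apply Quaternion.ext
    · simp [qi_eq, qj_eq, qk_eq, Quaternion.re_mul, Quaternion.imI_mul, Quaternion.imJ_mul,
        Quaternion.imK_mul]
      linear_combination (Real.cos (2*η)^3*Real.sin s^2) * pyth σ +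
        (Real.cos (2*η)*Real.sin s^2) * pyth (2*η) + Real.cos (2*η) * pyth s
    · simp [qi_eq, qj_eq, qk_eq, Quaternion.re_mul, Quaternion.imI_mul, Quaternion.imJ_mul,
        Quaternion.imK_mul]
      linear_combination (-2*Real.cos (2*η)*Real.sin (2*η)*Real.cos s*Real.sin s) * pyth σ
    · simp [qi_eq, qj_eq, qk_eq, Quaternion.re_mul, Quaternion.imI_mul, Quaternion.imJ_mul,
        Quaternion.imK_mul]
      linear_combination (-(Real.sin σ)*Real.cos (2*η)^2*Real.sin (2*η)*Real.sin s^2) * pyth σ +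
        (-(Real.sin σ)*Real.sin (2*η)*Real.sin s^2) * pyth (2*η)
    · simp [qi_eq, qj_eq, qk_eq, Quaternion.re_mul, Quaternion.imI_mul, Quaternion.imJ_mul,
        Quaternion.imK_mul]
      linear_combination (Real.cos σ*Real.cos (2*η)^2*Real.sin (2*η)*Real.sin s^2) * pyth σ +
        (Real.cos σ*Real.sin (2*η)*Real.sin s^2) * pyth (2*η)
  -- parts (4)/(5): the product p*q*(star h)*a
  have hGhi : (((Real.cos (2*η) : ℝ) : ℍ[ℝ]) - Real.sin (2*η) • u) * (h * qi) = -u := by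
    rw [hhe, hu]
    apply Quaternion.ext
    · simp [qi_eq, qj_eq, qk_eq, Quaternion.re_mul, Quaternion.imI_mul, Quaternion.imJ_mul,
        Quaternion.imK_mul]
      linear_combination (-(Real.cos (2*η))*Real.sin (2*η)) * pyth σ
    · simp [qi_eq, qj_eq, qk_eq, Quaternion.re_mul, Quaternion.imI_mul, Quaternion.imJ_mul,
        Quaternion.imK_mul]
      ring
    · simp [qi_eq, qj_eq, qk_eq, Quaternion.re_mul, Quaternion.imI_mul, Quaternion.imJ_mul,
        Quaternion.imK_mul]
      linear_combination Real.sin σ * pyth (2*η)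
    · simp [qi_eq, qj_eq, qk_eq, Quaternion.re_mul, Quaternion.imI_mul, Quaternion.imJ_mul,
        Quaternion.imK_mul]
      linear_combination (-(Real.cos σ)) * pyth (2*η)
  have cancel : ∀ x : ℍ[ℝ], NormedSpace.exp ((-s) • h) * (NormedSpace.exp (s • h) * x) = x := by
    intro x
    rw [← mul_assoc, hE'E, one_mul]
  have h4 : p * q * star h * a = NormedSpace.exp (s • h) * u := by
    rw [hp, hq, hsh, ha, hG]
    simp only [mul_assoc]
    rw [cancel, neg_mul, mul_neg, hGhi, neg_neg]
  have h4re : (NormedSpace.exp (s • h) * u).re = 0 := by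
    rw [hE, hhe, hu]
    simp [qi_eq, qj_eq, qk_eq, Quaternion.re_mul, Quaternion.imI_mul, Quaternion.imJ_mul,
      Quaternion.imK_mul]
    ring
  have h5 : p * q * star h * a * star h = -(NormedSpace.exp (s • h) * (u * h)) := by
    rw [h4, hsh, mul_neg, mul_assoc]
  have h5re : (NormedSpace.exp (s • h) * (u * h)).re = 0 := by
    rw [hE, hhe, hu]
    simp [qi_eq, qj_eq, qk_eq, Quaternion.re_mul, Quaternion.imI_mul, Quaternion.imJ_mul,
      Quaternion.imK_mul]
    ring
  refine ⟨by rw [hfa]; exact him_h, by rw [hfa, him_h]; exact hq, ?_, ?_, ?_, ?_⟩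
  · rw [him_bh, smul_smul, hscos, exp_unit_pure_neg _ _ hW_re hW_n]
    exact hpW
  · rw [h4, h4re]
  · rw [h5]
    simp [h5re]
  · rw [hsh, mul_neg, hbh]
    simp [hW_re]
end

section
/- Let s, σ ∈ ℝ. Set u = cos σ·k − sin σ·j, h = cos σ·j + sin σ·k, q = exp(s·h), p = exp(s·h) * exp((s·cos σ)·u) * exp(−s·h), and b = exp(s·h) * exp((−σ)·u) * i * exp(−s·h) (the bypass parameterization of K'_s from Lemma 7.3). Then: (1) re(b⁻¹ * q * i * q⁻¹) = cos σ; (2) re(p⁻¹ * p⁻¹) = cos(2s·cos σ); (3) re(b⁻¹ * p⁻¹ * p⁻¹ * q * i * q⁻¹) = cos(σ − 2s·cos σ). (The character computations (7.8)–(7.10) in the proof of Proposition 7.6 of the paper for the bypass tangle, identifying the image curve π₀ ∘ U_s(K'_s) as a figure-eight curve σ ↦ (cos σ, cos(2s cos σ), cos(σ ∓ 2s cos σ)) around the bottom-left corner of the pillowcase.) -/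
open Quaternion

noncomputable instance : NormedAlgebra ℚ ℍ[ℝ] := NormedAlgebra.restrictScalars ℚ ℝ ℍ[ℝ]
@[simp] lemma qi_re : qi.re = 0 := rfl
@[simp] lemma qi_imI : qi.imI = 1 := rfl
@[simp] lemma qi_imJ : qi.imJ = 0 := rfl
@[simp] lemma qi_imK : qi.imK = 0 := rfl
@[simp] lemma qj_re : qj.re = 0 := rfl
@[simp] lemma qj_imI : qj.imI = 0 := rfl
@[simp] lemma qj_imJ : qj.imJ = 1 := rfl
@[simp] lemma qj_imK : qj.imK = 0 := rfl
@[simp] lemma qk_re : qk.re = 0 := rfl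
@[simp] lemma qk_imI : qk.imI = 0 := rfl
@[simp] lemma qk_imJ : qk.imJ = 0 := rfl
@[simp] lemma qk_imK : qk.imK = 1 := rfl

/-- Closed form of the quaternion exponential of a real multiple of a pure unit quaternion. -/
lemma exp_smul_pure (t : ℝ) (v : ℍ[ℝ]) (h0 : v.re = 0) (h1 : ‖v‖ = 1) :
    NormedSpace.exp (t • v) = (Real.cos t : ℍ[ℝ]) + Real.sin t • v := by
  rcases eq_or_ne t 0 with rfl | ht
  · simp
  · rw [Quaternion.exp_of_re_eq_zero _ (by simp [h0]), norm_smul, h1, mul_one,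
      Real.norm_eq_abs, Real.cos_abs, smul_smul]
    congr 1
    have : Real.sin |t| / |t| = Real.sin t / t := by
      rcases abs_cases t with ⟨h, _⟩ | ⟨h, _⟩
      · rw [h]
      · rw [h, Real.sin_neg, neg_div_neg_eq]
    rw [this, div_mul_cancel₀ _ ht]

/-- Opposite exponentials of real multiples of a quaternion multiply to one. -/
lemma exp_neg_smul_mul_exp_smul (t : ℝ) (v : ℍ[ℝ]) :
    NormedSpace.exp ((-t) • v) * NormedSpace.exp (t • v) = 1 := by
  rw [← NormedSpace.exp_add_of_commute (((Commute.refl v).smul_left (-t)).smul_right t),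
    ← add_smul, neg_add_cancel, zero_smul, NormedSpace.exp_zero]

/-- The real part of a quaternion product is symmetric. -/
lemma mul_re_comm (a b : ℍ[ℝ]) : (a * b).re = (b * a).re := by
  simp only [Quaternion.re_mul]; ring

/-- The real part is invariant under conjugation. -/
lemma conj_re {E Ei : ℍ[ℝ]} (hEiE : Ei * E = 1) (z : ℍ[ℝ]) : (E * z * Ei).re = z.re := by
  rw [mul_re_comm, ← mul_assoc, hEiE, one_mul]

/-- The character computations (7.8)–(7.10) in the proof of Proposition 7.6 of the paper for
the bypass tangle: along the parameterization of `K'_s`, the three pillowcase characters are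
`(cos σ, cos(2s cos σ), cos(σ − 2s cos σ))`, identifying the image curve `π₀ ∘ U_s(K'_s)` as
a figure-eight curve around the bottom-left corner of the pillowcase. -/
theorem bypass_character_computation (s σ : ℝ)
    (u h q p b : ℍ[ℝ])
    (hu : u = Real.cos σ • qk - Real.sin σ • qj)
    (hh : h = Real.cos σ • qj + Real.sin σ • qk)
    (hq : q = NormedSpace.exp (s • h))
    (hp : p = NormedSpace.exp (s • h) * NormedSpace.exp ((s * Real.cos σ) • u) *
      NormedSpace.exp ((-s) • h))
    (hb : b = NormedSpace.exp (s • h) * NormedSpace.exp ((-σ) • u) * qi *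
      NormedSpace.exp ((-s) • h)) :
    (b⁻¹ * q * qi * q⁻¹).re = Real.cos σ ∧
    (p⁻¹ * p⁻¹).re = Real.cos (2 * s * Real.cos σ) ∧
    (b⁻¹ * p⁻¹ * p⁻¹ * q * qi * q⁻¹).re = Real.cos (σ - 2 * s * Real.cos σ) := by
  set c := Real.cos σ with hcσ
  set d := Real.sin σ with hdσ
  set F := Real.cos (s * c) with hF
  set G := Real.sin (s * c) with hG
  have hc : c ^ 2 + d ^ 2 = 1 := Real.cos_sq_add_sin_sq σ
  have hsc : F ^ 2 + G ^ 2 = 1 := Real.cos_sq_add_sin_sq _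
  have h0u : u.re = 0 := by simp [hu]
  have h1u : ‖u‖ = 1 := by
    have h2 : ‖u‖ * ‖u‖ = 1 := by
      rw [← Quaternion.normSq_eq_norm_mul_self]
      simp only [hu, qj_re, qj_imI, qj_imJ, qj_imK, qk_re, qk_imI, qk_imJ, qk_imK, Quaternion.normSq_def', Quaternion.re_sub, Quaternion.imI_sub,
        Quaternion.imJ_sub, Quaternion.imK_sub, Quaternion.re_smul, Quaternion.imI_smul,
        Quaternion.imJ_smul, Quaternion.imK_smul, smul_eq_mul]
      nlinarith [hc]
    nlinarith [norm_nonneg u]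
  set E := NormedSpace.exp (s • h) with hE
  set Ei := NormedSpace.exp ((-s) • h) with hEi
  have hEiE : Ei * E = 1 := exp_neg_smul_mul_exp_smul s h
  have hEinv : E⁻¹ = Ei := by
    rw [hE, hEi, ← NormedSpace.exp_neg, neg_smul]
  have hEiinv : Ei⁻¹ = E := by rw [← hEinv, inv_inv]
  set V : ℍ[ℝ] := (⟨c, 0, -(d * d), d * c⟩ : ℍ[ℝ]) with hV
  set Y : ℍ[ℝ] := (⟨F, 0, G * d, -(G * c)⟩ : ℍ[ℝ]) with hY
  set ni : ℍ[ℝ] := (⟨0, -1, 0, 0⟩ : ℍ[ℝ]) with hni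
  set w : ℍ[ℝ] := (⟨0, -c, d * c, d * d⟩ : ℍ[ℝ]) with hw
  have hVC : V.re = c ∧ V.imI = 0 ∧ V.imJ = -(d * d) ∧ V.imK = d * c := ⟨rfl, rfl, rfl, rfl⟩
  have hYC : Y.re = F ∧ Y.imI = 0 ∧ Y.imJ = G * d ∧ Y.imK = -(G * c) := ⟨rfl, rfl, rfl, rfl⟩
  have hniC : ni.re = 0 ∧ ni.imI = -1 ∧ ni.imJ = 0 ∧ ni.imK = 0 := ⟨rfl, rfl, rfl, rfl⟩
  have hwC : w.re = 0 ∧ w.imI = -c ∧ w.imJ = d * c ∧ w.imK = d * d := ⟨rfl, rfl, rfl, rfl⟩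
  have hVp : NormedSpace.exp (σ • u) = V := by
    rw [hV, exp_smul_pure _ u h0u h1u, hu]
    ext <;> simp [← hcσ, ← hdσ] <;> ring
  have hVinv : (NormedSpace.exp ((-σ) • u))⁻¹ = V := by
    rw [← NormedSpace.exp_neg, neg_smul, neg_neg, hVp]
  have hYm : NormedSpace.exp ((-(s * c)) • u) = Y := by
    rw [hY, exp_smul_pure _ u h0u h1u, Real.cos_neg, Real.sin_neg, hu, ← hF, ← hG]
    ext <;> simp [← hcσ, ← hdσ] <;> ring
  have hYinv : (NormedSpace.exp ((s * c) • u))⁻¹ = Y := by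
    rw [← NormedSpace.exp_neg, ← neg_smul, hYm]
  have hqi_inv : qi⁻¹ = ni := by
    rw [inv_eq_of_mul_eq_one_right]
    ext <;> simp [Quaternion.re_mul, Quaternion.imI_mul, Quaternion.imJ_mul, Quaternion.imK_mul, hniC]
  have hqi : qi = (⟨0, 1, 0, 0⟩ : ℍ[ℝ]) := rfl
  have hwmul : ni * V = w := by
    ext <;> simp [Quaternion.re_mul, Quaternion.imI_mul, Quaternion.imJ_mul, Quaternion.imK_mul, hniC, hVC, hwC] <;> ring
  have hbinv : b⁻¹ = E * w * Ei := by
    rw [hb, mul_inv_rev, mul_inv_rev, mul_inv_rev, hEiinv, hEinv, hqi_inv, hVinv, ← hwmul]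
    noncomm_ring
  have hpinv : p⁻¹ = E * Y * Ei := by
    rw [hp, mul_inv_rev, mul_inv_rev, hEiinv, hEinv, hYinv]
    noncomm_ring
  have hqinv : q⁻¹ = Ei := by rw [hq, hEinv]
  refine ⟨?_, ?_, ?_⟩
  · have key : b⁻¹ * q * qi * q⁻¹ = E * (w * ((Ei * E) * (qi * Ei))) := by
      rw [hbinv, hqinv, hq]; noncomm_ring
    rw [key, hEiE, one_mul,
      show E * (w * (qi * Ei)) = E * (w * qi) * Ei by noncomm_ring,
      conj_re hEiE]
    simp [Quaternion.re_mul, Quaternion.imI_mul, Quaternion.imJ_mul, Quaternion.imK_mul, hwC]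
  · have key : p⁻¹ * p⁻¹ = E * (Y * ((Ei * E) * (Y * Ei))) := by
      rw [hpinv]; noncomm_ring
    rw [key, hEiE, one_mul,
      show E * (Y * (Y * Ei)) = E * (Y * Y) * Ei by noncomm_ring,
      conj_re hEiE]
    rw [show 2 * s * c = 2 * (s * c) by ring, Real.cos_two_mul, ← hF]
    simp [Quaternion.re_mul, Quaternion.imI_mul, Quaternion.imJ_mul, Quaternion.imK_mul, hYC]
    linear_combination (-(G ^ 2)) * hc + (-1 : ℝ) * hsc
  · have key : b⁻¹ * p⁻¹ * p⁻¹ * q * qi * q⁻¹ =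
        E * (w * ((Ei * E) * (Y * ((Ei * E) * (Y * ((Ei * E) * (qi * Ei))))))) := by
      rw [hbinv, hpinv, hqinv, hq]; noncomm_ring
    rw [key, hEiE, one_mul, one_mul, one_mul,
      show E * (w * (Y * (Y * (qi * Ei)))) = E * (w * (Y * (Y * qi))) * Ei by noncomm_ring,
      conj_re hEiE]
    rw [Real.cos_sub, show 2 * s * c = 2 * (s * c) by ring, Real.cos_two_mul, Real.sin_two_mul,
      ← hF, ← hG, ← hcσ, ← hdσ]
    simp [Quaternion.re_mul, Quaternion.imI_mul, Quaternion.imJ_mul, Quaternion.imK_mul, hwC, hYC]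
    linear_combination (-(G ^ 2) * c + 2 * F * G * d) * hc + (-c) * hsc
end
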